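/- Let X be a finite nonempty set, Z a set, and D : Z × Z → [0,1] a function satisfying D(z,z) = 0 for all z ∈ Z. Let F be a finite set of functions from X to Z, let f* ∈ F, let T ≥ 1 be an integer, let x^(1),…,x^(T) ∈ X, and let β ≥ 0 be a real number. Suppose F = F_1 ⊇ F_2 ⊇ … ⊇ F_T are subsets each containing f*, such that for every t ∈ {1,…,T} and every f ∈ F_t one has ∑_{s=1}^{t−1} D(f(x^(s)), f*(x^(s))) ≤ β. Then ∑_{t=1}^{T} (1/|F_t|) ∑_{f ∈ F_t} D(f(x^(t)), f*(x^(t))) ≤ (β+1)·log|F|, and also ∑_{t=1}^{T} (1/|F_t|) ∑_{f ∈ F_t} D(f(x^(t)), f*(x^(t))) ≤ 3(β+1)·|X|·(1 + log T), where log denotes the natural logarithm. -/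

import Mathlib

lemma one_sub_div_le_log {a b : ℝ} (hb : 0 < b) (hba : b ≤ a) :
    1 - b / a ≤ Real.log a - Real.log b := by
  have ha : 0 < a := lt_of_lt_of_le hb hba
  have h1 : Real.log (b / a) ≤ b / a - 1 := Real.log_le_sub_one_of_pos (div_pos hb ha)
  rw [Real.log_div hb.ne' ha.ne'] at h1
  linarith

lemma my_harmonic_le (n : ℕ) :
    ∑ i ∈ Finset.range n, ((i : ℝ) + 1)⁻¹ ≤ 1 + Real.log n := by
  induction n with
  | zero => simp
  | succ n ih =>
    rcases Nat.eq_zero_or_pos n with rfl | hn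
    · simp
    · rw [Finset.sum_range_succ]
      have hn' : (0:ℝ) < n := by exact_mod_cast hn
      have hstep : ((n:ℝ) + 1)⁻¹ ≤ Real.log (n+1) - Real.log n := by
        have := one_sub_div_le_log (a := (n:ℝ)+1) (b := (n:ℝ)) hn' (by linarith)
        have h2 : 1 - (n:ℝ)/((n:ℝ)+1) = ((n:ℝ)+1)⁻¹ := by
          field_simp
          ring
        linarith [this, h2.symm.le, h2.le]
      have : (n:ℝ) + 1 = ((n+1 : ℕ) : ℝ) := by push_cast; ring
      rw [← this]
      linarith

theorem version_space_average_bound {X Z : Type*} [Fintype X] [Nonempty X]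
    (D : Z → Z → ℝ)
    (hD01 : ∀ z₁ z₂, D z₁ z₂ ∈ Set.Icc (0 : ℝ) 1)
    (hDdiag : ∀ z, D z z = 0)
    (F : Finset (X → Z)) (fstar : X → Z) (hfstar : fstar ∈ F)
    (T : ℕ) (hT : 1 ≤ T) (x : ℕ → X) (β : ℝ) (hβ : 0 ≤ β)
    (Fs : ℕ → Finset (X → Z))
    (hF1 : Fs 1 = F)
    (hchain : ∀ t ∈ Finset.Icc 1 (T - 1), Fs (t + 1) ⊆ Fs t)
    (hmem : ∀ t ∈ Finset.Icc 1 T, fstar ∈ Fs t)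
    (hoff : ∀ t ∈ Finset.Icc 1 T, ∀ f ∈ Fs t,
      ∑ s ∈ Finset.Icc 1 (t - 1), D (f (x s)) (fstar (x s)) ≤ β) :
    (∑ t ∈ Finset.Icc 1 T, ((Fs t).card : ℝ)⁻¹ * ∑ f ∈ Fs t, D (f (x t)) (fstar (x t))
        ≤ (β + 1) * Real.log (F.card)) ∧
    (∑ t ∈ Finset.Icc 1 T, ((Fs t).card : ℝ)⁻¹ * ∑ f ∈ Fs t, D (f (x t)) (fstar (x t))
        ≤ 3 * (β + 1) * (Fintype.card X) * (1 + Real.log T)) := by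
  have hD0 : ∀ z₁ z₂, 0 ≤ D z₁ z₂ := fun z₁ z₂ => (hD01 z₁ z₂).1
  have hD1 : ∀ z₁ z₂, D z₁ z₂ ≤ 1 := fun z₁ z₂ => (hD01 z₁ z₂).2
  have hβ1 : (0:ℝ) < β + 1 := by linarith
  -- cumulative sums are nonnegative
  have hcum0 : ∀ (t : ℕ) (f : X → Z), 0 ≤ ∑ s ∈ Finset.Icc 1 t, D (f (x s)) (fstar (x s)) :=
    fun t f => Finset.sum_nonneg fun s _ => hD0 _ _
  -- cumulative sums up to t are at most β + 1 for f ∈ Fs t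
  have hcum1 : ∀ t ∈ Finset.Icc 1 T, ∀ f ∈ Fs t,
      ∑ s ∈ Finset.Icc 1 t, D (f (x s)) (fstar (x s)) ≤ β + 1 := by
    intro t ht f hf
    obtain ⟨u, rfl⟩ : ∃ u, t = u + 1 := ⟨t - 1, by simp at ht; omega⟩
    rw [Finset.sum_Icc_succ_top (by omega)]
    have := hoff _ ht f hf
    simp only [Nat.add_sub_cancel] at this
    exact add_le_add this (hD1 _ _)
  -- cardinalities are positive
  have hcard : ∀ t ∈ Finset.Icc 1 T, 0 < (Fs t).card := by
    intro t ht; exact Finset.card_pos.2 ⟨fstar, hmem t ht⟩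
  -- the potential function
  set Φ : ℕ → ℝ := fun t => ∑ f ∈ Fs (min t T),
      (β + 1 - ∑ s ∈ Finset.Icc 1 (t-1), D (f (x s)) (fstar (x s))) with hΦdef
  have hminmem : ∀ t ∈ Finset.Icc 1 (T+1), min t T ∈ Finset.Icc 1 T := by
    intro t ht; simp at ht ⊢; omega
  have hΦlb : ∀ t ∈ Finset.Icc 1 (T+1), β + 1 ≤ Φ t := by
    intro t ht
    have hm := hminmem t ht
    have hterm : ∀ f ∈ Fs (min t T),
        0 ≤ β + 1 - ∑ s ∈ Finset.Icc 1 (t-1), D (f (x s)) (fstar (x s)) := by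
      intro f hf
      rcases le_or_gt t T with h | h
      · have : min t T = t := min_eq_left h
        rw [this] at hf
        have := hoff t (by simp at ht ⊢; omega) f hf
        linarith
      · have ht' : t = T + 1 := by simp at ht; omega
        have hmin : min t T = T := by omega
        rw [hmin] at hf
        have : t - 1 = T := by omega
        rw [this]
        have := hcum1 T (by simp; omega) f hf
        linarith
    have hfs : fstar ∈ Fs (min t T) := hmem _ hm
    have hstar : β + 1 - ∑ s ∈ Finset.Icc 1 (t-1), D (fstar (x s)) (fstar (x s)) = β + 1 := by
      simp [hDdiag]
    calc β + 1 = β + 1 - ∑ s ∈ Finset.Icc 1 (t-1), D (fstar (x s)) (fstar (x s)) := hstar.symm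
      _ ≤ Φ t := Finset.single_le_sum hterm hfs
  -- step inequality
  have hstep : ∀ t ∈ Finset.Icc 1 T,
      Φ (t+1) + ∑ f ∈ Fs t, D (f (x t)) (fstar (x t)) ≤ Φ t := by
    intro t ht
    simp only [Finset.mem_Icc] at ht
    have hsub : Fs (min (t+1) T) ⊆ Fs t := by
      rcases lt_or_ge t T with h | h
      · have : min (t+1) T = t + 1 := min_eq_left (by omega)
        rw [this]
        exact hchain t (by simp; omega)
      · have ht' : t = T := by omega
        have : min (t+1) T = t := by omega
        rw [this]
    have hmint : min t T = t := min_eq_left ht.2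
    have hnn : ∀ f ∈ Fs t,
        0 ≤ β + 1 - ∑ s ∈ Finset.Icc 1 t, D (f (x s)) (fstar (x s)) := by
      intro f hf
      have := hcum1 t (by simp; omega) f hf
      linarith
    have h1 : Φ (t+1) ≤ ∑ f ∈ Fs t,
        (β + 1 - ∑ s ∈ Finset.Icc 1 t, D (f (x s)) (fstar (x s))) := by
      simp only [hΦdef, Nat.add_sub_cancel]
      exact Finset.sum_le_sum_of_subset_of_nonneg hsub (fun f hf _ => hnn f hf)
    have h2 : ∑ f ∈ Fs t, (β + 1 - ∑ s ∈ Finset.Icc 1 t, D (f (x s)) (fstar (x s)))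
        = Φ t - ∑ f ∈ Fs t, D (f (x t)) (fstar (x t)) := by
      simp only [hΦdef, hmint]
      rw [← Finset.sum_sub_distrib]
      apply Finset.sum_congr rfl
      intro f hf
      obtain ⟨u, rfl⟩ : ∃ u, t = u + 1 := ⟨t - 1, by omega⟩
      rw [Finset.sum_Icc_succ_top (by omega)]
      simp only [Nat.add_sub_cancel]
      ring
    linarith [h1, h2.le, h2.ge]
  -- Φ t ≤ (β+1) * card
  have hΦub : ∀ t ∈ Finset.Icc 1 T, Φ t ≤ (β + 1) * (Fs t).card := by
    intro t ht
    simp only [Finset.mem_Icc] at ht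
    have hmint : min t T = t := min_eq_left ht.2
    simp only [hΦdef, hmint]
    calc ∑ f ∈ Fs t, (β + 1 - ∑ s ∈ Finset.Icc 1 (t-1), D (f (x s)) (fstar (x s)))
        ≤ ∑ _f ∈ Fs t, (β + 1) := by
          apply Finset.sum_le_sum
          intro f hf
          have := hcum0 (t-1) f
          linarith
      _ = (β + 1) * (Fs t).card := by rw [Finset.sum_const, nsmul_eq_mul]; ring
  -- key per-round bound
  have hkey : ∀ t ∈ Finset.Icc 1 T,
      ((Fs t).card : ℝ)⁻¹ * ∑ f ∈ Fs t, D (f (x t)) (fstar (x t))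
        ≤ (β + 1) * (Real.log (Φ t) - Real.log (Φ (t+1))) := by
    intro t ht
    have htm : t ∈ Finset.Icc 1 T := ht
    simp only [Finset.mem_Icc] at ht
    set S := ∑ f ∈ Fs t, D (f (x t)) (fstar (x t)) with hS
    have hS0 : 0 ≤ S := Finset.sum_nonneg fun f _ => hD0 _ _
    set a := Φ t with ha
    set b := Φ (t+1) with hb
    have hbpos : 0 < b := lt_of_lt_of_le hβ1 (hΦlb (t+1) (by simp; omega))
    have habS : b + S ≤ a := hstep t htm
    have hba : b ≤ a := by linarith
    have hapos : 0 < a := lt_of_lt_of_le hbpos hba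
    have hn : (0:ℝ) < (Fs t).card := by exact_mod_cast hcard t htm
    have hub : a ≤ (β + 1) * (Fs t).card := hΦub t htm
    have hinv : ((Fs t).card : ℝ)⁻¹ ≤ (β + 1) / a := by
      rw [inv_eq_one_div, div_le_div_iff₀ hn hapos]
      linarith [hub]
    have h1 : ((Fs t).card : ℝ)⁻¹ * S ≤ (β + 1) * (S / a) := by
      calc ((Fs t).card : ℝ)⁻¹ * S ≤ ((β + 1) / a) * S :=
            mul_le_mul_of_nonneg_right hinv hS0
        _ = (β + 1) * (S / a) := by ring
    have h2 : S / a ≤ Real.log a - Real.log b := by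
      have := one_sub_div_le_log hbpos hba
      have h3 : S / a ≤ 1 - b / a := by
        rw [div_le_iff₀ hapos, sub_mul, one_mul, div_mul_cancel₀ _ hapos.ne']
        linarith
      linarith
    calc ((Fs t).card : ℝ)⁻¹ * S ≤ (β + 1) * (S / a) := h1
      _ ≤ (β + 1) * (Real.log a - Real.log b) := by
          apply mul_le_mul_of_nonneg_left h2 hβ1.le
  -- sum and telescope
  have htele : ∑ t ∈ Finset.Icc 1 T, (Real.log (Φ t) - Real.log (Φ (t+1)))
      = Real.log (Φ 1) - Real.log (Φ (T+1)) := by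
    have : ∀ n : ℕ, ∑ t ∈ Finset.Icc 1 n, (Real.log (Φ t) - Real.log (Φ (t+1)))
        = Real.log (Φ 1) - Real.log (Φ (n+1)) ∨ n = 0 := by
      intro n
      induction n with
      | zero => right; rfl
      | succ n ih =>
        left
        rw [Finset.sum_Icc_succ_top (by omega)]
        rcases ih with h | h
        · rw [h]; ring
        · subst h; simp
    rcases this T with h | h
    · exact h
    · omega
  have hsum1 : ∑ t ∈ Finset.Icc 1 T, ((Fs t).card : ℝ)⁻¹ * ∑ f ∈ Fs t, D (f (x t)) (fstar (x t))
      ≤ (β + 1) * Real.log (F.card) := by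
    calc ∑ t ∈ Finset.Icc 1 T, ((Fs t).card : ℝ)⁻¹ * ∑ f ∈ Fs t, D (f (x t)) (fstar (x t))
        ≤ ∑ t ∈ Finset.Icc 1 T, (β + 1) * (Real.log (Φ t) - Real.log (Φ (t+1))) :=
          Finset.sum_le_sum hkey
      _ = (β + 1) * (Real.log (Φ 1) - Real.log (Φ (T+1))) := by
          rw [← Finset.mul_sum, htele]
      _ ≤ (β + 1) * Real.log (F.card) := by
          apply mul_le_mul_of_nonneg_left _ hβ1.le
          have hΦ1 : Φ 1 ≤ (β + 1) * F.card := by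
            have := hΦub 1 (by simp; omega)
            rwa [hF1] at this
          have hΦT : β + 1 ≤ Φ (T+1) := hΦlb (T+1) (by simp)
          have hFpos : (0:ℝ) < F.card := by
            exact_mod_cast Finset.card_pos.2 ⟨fstar, hfstar⟩
          have h1 : Real.log (Φ 1) ≤ Real.log ((β+1) * F.card) := by
            apply Real.log_le_log (lt_of_lt_of_le hβ1 (hΦlb 1 (by simp))) hΦ1
          have h2 : Real.log (β+1) ≤ Real.log (Φ (T+1)) :=
            Real.log_le_log hβ1 hΦT
          have h3 : Real.log ((β+1) * F.card) = Real.log (β+1) + Real.log F.card :=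
            Real.log_mul hβ1.ne' hFpos.ne'
          linarith
  refine ⟨hsum1, ?_⟩
  -- Statement 2: per-point analysis
  classical
  set Sx : X → Finset ℕ := fun y => (Finset.Icc 1 T).filter (fun t => x t = y) with hSx
  set J : X → ℕ → ℕ := fun y t => ((Sx y).filter (fun s => s < t)).card with hJ
  set L : ℕ → ℝ := fun t => ((Fs t).card : ℝ)⁻¹ * ∑ f ∈ Fs t, D (f (x t)) (fstar (x t))
    with hL
  have hL1 : ∀ t ∈ Finset.Icc 1 T, L t ≤ 1 := by
    intro t ht
    have hn : (0:ℝ) < (Fs t).card := by exact_mod_cast hcard t ht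
    have hs : ∑ f ∈ Fs t, D (f (x t)) (fstar (x t)) ≤ (Fs t).card • (1:ℝ) :=
      Finset.sum_le_card_nsmul _ _ 1 (fun f _ => hD1 _ _)
    rw [nsmul_eq_mul, mul_one] at hs
    calc L t ≤ ((Fs t).card : ℝ)⁻¹ * (Fs t).card :=
          mul_le_mul_of_nonneg_left hs (by positivity)
      _ = 1 := inv_mul_cancel₀ hn.ne'
  have hLj : ∀ y : X, ∀ t ∈ Sx y, 1 ≤ J y t → L t ≤ β / (J y t) := by
    intro y t ht hJ1
    simp only [hSx, Finset.mem_filter, Finset.mem_Icc] at ht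
    obtain ⟨⟨ht1, htT⟩, hxy⟩ := ht
    have hJpos : (0:ℝ) < (J y t : ℝ) := by exact_mod_cast hJ1
    have hd : ∀ f ∈ Fs t, D (f y) (fstar y) ≤ β / (J y t) := by
      intro f hf
      have hsubs : (Sx y).filter (fun s => s < t) ⊆ Finset.Icc 1 (t-1) := by
        intro s hs
        simp only [hSx, Finset.mem_filter, Finset.mem_Icc] at hs ⊢
        omega
      have hconst : ∑ s ∈ (Sx y).filter (fun s => s < t), D (f (x s)) (fstar (x s))
          = (J y t : ℝ) * D (f y) (fstar y) := by
        rw [Finset.sum_congr rfl (fun s hs => ?_), Finset.sum_const, nsmul_eq_mul]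
        simp only [hSx, Finset.mem_filter, Finset.mem_Icc] at hs
        rw [hs.1.2]
      have hle : ∑ s ∈ (Sx y).filter (fun s => s < t), D (f (x s)) (fstar (x s))
          ≤ ∑ s ∈ Finset.Icc 1 (t-1), D (f (x s)) (fstar (x s)) :=
        Finset.sum_le_sum_of_subset_of_nonneg hsubs (fun s _ _ => hD0 _ _)
      have hoffb := hoff t (by simp only [Finset.mem_Icc]; omega) f hf
      rw [hconst] at hle
      rw [le_div_iff₀ hJpos]
      calc D (f y) (fstar y) * (J y t : ℝ) = (J y t : ℝ) * D (f y) (fstar y) := by ring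
        _ ≤ β := le_trans hle hoffb
    have hn : (0:ℝ) < (Fs t).card := by
      exact_mod_cast hcard t (by simp only [Finset.mem_Icc]; omega)
    have hs : ∑ f ∈ Fs t, D (f (x t)) (fstar (x t)) ≤ (Fs t).card * (β / (J y t)) := by
      rw [hxy]
      calc ∑ f ∈ Fs t, D (f y) (fstar y) ≤ ∑ _f ∈ Fs t, (β / (J y t)) :=
            Finset.sum_le_sum hd
        _ = (Fs t).card * (β / (J y t)) := by rw [Finset.sum_const, nsmul_eq_mul]
    calc L t ≤ ((Fs t).card : ℝ)⁻¹ * ((Fs t).card * (β / (J y t))) :=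
          mul_le_mul_of_nonneg_left hs (by positivity)
      _ = β / (J y t) := by field_simp
  have hL2 : ∀ y : X, ∀ t ∈ Sx y, L t ≤ 2 * (β + 1) * ((J y t : ℝ) + 1)⁻¹ := by
    intro y t ht
    have htIcc : t ∈ Finset.Icc 1 T := by
      simp only [hSx, Finset.mem_filter] at ht; exact ht.1
    have hJp : (0:ℝ) < (J y t : ℝ) + 1 := by positivity
    by_cases h : (J y t : ℝ) + 1 ≤ 2 * (β + 1)
    · calc L t ≤ 1 := hL1 t htIcc
        _ ≤ 2 * (β + 1) * ((J y t : ℝ) + 1)⁻¹ := by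
            rw [← div_eq_mul_inv, le_div_iff₀ hJp, one_mul]
            exact h
    · push_neg at h
      have hJ1 : 1 ≤ J y t := by
        by_contra hc
        push_neg at hc
        interval_cases h' : J y t
        · simp at h; linarith
      have hJR : (1:ℝ) ≤ (J y t : ℝ) := by exact_mod_cast hJ1
      calc L t ≤ β / (J y t) := hLj y t ht hJ1
        _ ≤ 2 * (β + 1) * ((J y t : ℝ) + 1)⁻¹ := by
            rw [← div_eq_mul_inv, div_le_div_iff₀ (by linarith) hJp]
            nlinarith
  have hLnn : ∀ t, 0 ≤ L t := by
    intro t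
    apply mul_nonneg (by positivity) (Finset.sum_nonneg fun f _ => hD0 _ _)
  -- injectivity of the rank map
  have hmono : ∀ y : X, ∀ t1 ∈ Sx y, ∀ t2 ∈ Sx y, t1 < t2 → J y t1 < J y t2 := by
    intro y t1 h1 t2 h2 hlt
    apply Finset.card_lt_card
    constructor
    · intro s hs
      simp only [Finset.mem_filter] at hs ⊢
      exact ⟨hs.1, by omega⟩
    · intro hsub
      have : t1 ∈ (Sx y).filter (fun s => s < t2) := by
        simp only [Finset.mem_filter]; exact ⟨h1, hlt⟩
      have := hsub this
      simp only [Finset.mem_filter] at this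
      omega
  have hinj : ∀ y : X, ∀ t1 ∈ Sx y, ∀ t2 ∈ Sx y, J y t1 = J y t2 → t1 = t2 := by
    intro y t1 h1 t2 h2 heq
    rcases lt_trichotomy t1 t2 with h | h | h
    · exact absurd heq (Nat.ne_of_lt (hmono y t1 h1 t2 h2 h))
    · exact h
    · exact absurd heq.symm (Nat.ne_of_lt (hmono y t2 h2 t1 h1 h))
  have hJlt : ∀ y : X, ∀ t ∈ Sx y, J y t < T := by
    intro y t ht
    simp only [hSx, Finset.mem_filter, Finset.mem_Icc] at ht
    have hsubs : ((Finset.Icc 1 T).filter (fun s => x s = y)).filter (fun s => s < t)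
        ⊆ Finset.Icc 1 (t-1) := by
      intro s hs
      simp only [Finset.mem_filter, Finset.mem_Icc] at hs ⊢
      omega
    have := Finset.card_le_card hsubs
    rw [Nat.card_Icc] at this
    simp only [hJ, hSx]
    omega
  have hsumJ : ∀ y : X, ∑ t ∈ Sx y, ((J y t : ℝ) + 1)⁻¹
      ≤ ∑ i ∈ Finset.range T, ((i : ℝ) + 1)⁻¹ := by
    intro y
    have himg : ∑ t ∈ Sx y, ((J y t : ℝ) + 1)⁻¹
        = ∑ i ∈ (Sx y).image (J y), ((i : ℝ) + 1)⁻¹ := by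
      rw [Finset.sum_image (hinj y)]
    rw [himg]
    apply Finset.sum_le_sum_of_subset_of_nonneg
    · intro i hi
      simp only [Finset.mem_image] at hi
      obtain ⟨t, ht, rfl⟩ := hi
      exact Finset.mem_range.2 (hJlt y t ht)
    · intro i _ _; positivity
  have hlogT : 0 ≤ Real.log T := Real.log_nonneg (by exact_mod_cast hT)
  have hpoint : ∀ y : X, ∑ t ∈ Sx y, L t ≤ 2 * (β + 1) * (1 + Real.log T) := by
    intro y
    calc ∑ t ∈ Sx y, L t ≤ ∑ t ∈ Sx y, 2 * (β + 1) * ((J y t : ℝ) + 1)⁻¹ :=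
          Finset.sum_le_sum (hL2 y)
      _ = 2 * (β + 1) * ∑ t ∈ Sx y, ((J y t : ℝ) + 1)⁻¹ := by rw [Finset.mul_sum]
      _ ≤ 2 * (β + 1) * ∑ i ∈ Finset.range T, ((i : ℝ) + 1)⁻¹ :=
          mul_le_mul_of_nonneg_left (hsumJ y) (by linarith)
      _ ≤ 2 * (β + 1) * (1 + Real.log T) :=
          mul_le_mul_of_nonneg_left (my_harmonic_le T) (by linarith)
  have hfiber : ∑ t ∈ Finset.Icc 1 T, L t = ∑ y ∈ Finset.univ, ∑ t ∈ Sx y, L t := by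
    exact (Finset.sum_fiberwise_of_maps_to (fun t _ => Finset.mem_univ (x t)) L).symm
  have hcardX : 1 ≤ (Fintype.card X : ℝ) := by
    exact_mod_cast Fintype.card_pos
  calc ∑ t ∈ Finset.Icc 1 T, ((Fs t).card : ℝ)⁻¹ * ∑ f ∈ Fs t, D (f (x t)) (fstar (x t))
      = ∑ y ∈ Finset.univ, ∑ t ∈ Sx y, L t := hfiber
    _ ≤ ∑ _y ∈ (Finset.univ : Finset X), 2 * (β + 1) * (1 + Real.log T) :=
        Finset.sum_le_sum (fun y _ => hpoint y)
    _ = (Fintype.card X : ℝ) * (2 * (β + 1) * (1 + Real.log T)) := by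
        rw [Finset.sum_const, nsmul_eq_mul, Finset.card_univ]
    _ ≤ 3 * (β + 1) * (Fintype.card X) * (1 + Real.log T) := by
        nlinarith [mul_nonneg (mul_nonneg hβ1.le (by linarith : (0:ℝ) ≤ (Fintype.card X : ℝ)))
          (by linarith : (0:ℝ) ≤ 1 + Real.log T)]
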